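/- The number of solutions S(n) to an n×n Sudoku satisfies S(n) ≤ ∏_{i=1}^n (∏_{j=1}^i μ(i,j)) · (∏_{j=i+1}^n ν(j)), where μ(i,j) = ((n²−(i−1)n−(j−1))!)^{n²/(n²−(i−1)n−(j−1))} and ν(j) = ((n²−(j−1)n)!)^{n²/(n²−(j−1)n)}. -/

import Mathlib

open Finset

namespace SudokuAux

open Equiv

noncomputable def SS (N : ℕ) (A : Fin N → Finset (Fin N)) : Finset (Fin N → Fin N) :=
  @Finset.filter _ (fun σ => Function.Injective σ ∧ ∀ k, σ k ∈ A k)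
    (Classical.decPred _) Finset.univ

lemma mem_SS {N : ℕ} {A : Fin N → Finset (Fin N)} {σ : Fin N → Fin N} :
    σ ∈ SS N A ↔ Function.Injective σ ∧ ∀ k, σ k ∈ A k := by
  simp [SS]

def Rv {N : ℕ} (A : Fin N → Finset (Fin N)) (σ : Fin N → Fin N) (k : Fin N) : ℕ :=
  ((A k) \ (Finset.image σ (Finset.univ.filter (fun t => (t : ℕ) < (k : ℕ))))).card

lemma kraft_aux {N : ℕ} (A : Fin N → Finset (Fin N)) :
    ∀ d k, k + d = N → ∀ ρ : Fin N → Fin N,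
      ∑ σ ∈ (SS N A).filter (fun σ => ∀ t : Fin N, (t : ℕ) < k → σ t = ρ t),
        ∏ t ∈ univ.filter (fun t : Fin N => k ≤ (t : ℕ)), (1 : ℝ) / (Rv A σ t) ≤ 1 := by
  classical
  intro d
  induction d with
  | zero =>
    intro k hk ρ
    have hempty : univ.filter (fun t : Fin N => k ≤ (t : ℕ)) = ∅ := by
      apply Finset.filter_false_of_mem
      intro t _
      have := t.isLt
      omega
    rw [hempty]
    simp only [Finset.prod_empty]
    rw [Finset.sum_const, nsmul_eq_mul, mul_one]
    have : ((SS N A).filter (fun σ => ∀ t : Fin N, (t : ℕ) < k → σ t = ρ t)).card ≤ 1 := by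
      apply Finset.card_le_one.2
      intro σ hσ σ' hσ'
      funext t
      have h1 := (Finset.mem_filter.1 hσ).2 t (by have := t.isLt; omega)
      have h2 := (Finset.mem_filter.1 hσ').2 t (by have := t.isLt; omega)
      rw [h1, h2]
    exact_mod_cast this
  | succ d ih =>
    intro k hk ρ
    have hkN : k < N := by omega
    set kk : Fin N := ⟨k, hkN⟩ with hkk
    set T := (SS N A).filter (fun σ => ∀ t : Fin N, (t : ℕ) < k → σ t = ρ t) with hT
    set D := (A kk) \ (Finset.image ρ (univ.filter (fun t : Fin N => (t : ℕ) < k))) with hD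
    have hRconst : ∀ σ ∈ T, Rv A σ kk = D.card := by
      intro σ hσ
      have hext := (Finset.mem_filter.1 hσ).2
      unfold Rv
      rw [hD]
      congr 2
      apply Finset.image_congr
      intro t ht
      exact hext t (Finset.mem_filter.1 ht).2
    have hmaps : ∀ σ ∈ T, σ kk ∈ D := by
      intro σ hσ
      have hσSS := (Finset.mem_filter.1 hσ).1
      have hext := (Finset.mem_filter.1 hσ).2
      obtain ⟨hinj, hmem⟩ := mem_SS.1 hσSS
      rw [hD, Finset.mem_sdiff]
      refine ⟨hmem kk, ?_⟩
      intro hcon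
      obtain ⟨t, ht, hts⟩ := Finset.mem_image.1 hcon
      have htk : (t : ℕ) < k := by simpa using (Finset.mem_filter.1 ht).2
      have h1 : σ t = σ kk := by rw [hext t htk, hts]
      have h2 : t = kk := hinj h1
      rw [h2] at htk
      exact lt_irrefl k htk
    -- split off the first factor of the product
    have hsplit : univ.filter (fun t : Fin N => k ≤ (t : ℕ)) =
        insert kk (univ.filter (fun t : Fin N => k + 1 ≤ (t : ℕ))) := by
      ext t
      simp only [Finset.mem_insert, Finset.mem_filter, Finset.mem_univ, true_and,
        Fin.ext_iff]
      constructor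
      · intro h
        rcases Nat.eq_or_lt_of_le h with h' | h'
        · left; simp [hkk, ← h']
        · right; omega
      · rintro (h | h)
        · simp only [h, hkk]; omega
        · omega
    have hnotmem : kk ∉ univ.filter (fun t : Fin N => k + 1 ≤ (t : ℕ)) := by
      simp [hkk]
    have key : ∑ σ ∈ T, (1 / (D.card : ℝ)) *
        ∏ t ∈ univ.filter (fun t : Fin N => k + 1 ≤ (t : ℕ)), (1 : ℝ) / (Rv A σ t) ≤ 1 := by
      rw [← Finset.sum_fiberwise_of_maps_to hmaps]
      have hbound : ∀ y ∈ D,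
          ∑ σ ∈ T.filter (fun σ => σ kk = y), ((1 / (D.card : ℝ)) *
            ∏ t ∈ univ.filter (fun t : Fin N => k + 1 ≤ (t : ℕ)), (1 : ℝ) / (Rv A σ t))
            ≤ 1 / (D.card : ℝ) := by
        intro y hy
        have heq : T.filter (fun σ => σ kk = y) =
            (SS N A).filter
              (fun σ => ∀ t : Fin N, (t : ℕ) < k + 1 → σ t = Function.update ρ kk y t) := by
          rw [hT, Finset.filter_filter]
          apply Finset.filter_congr
          intro σ _
          constructor
          · rintro ⟨h1, h2⟩ t ht
            by_cases htk : (t : ℕ) < k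
            · rw [Function.update_of_ne, h1 t htk]
              intro hh
              rw [hh] at htk
              simp [hkk] at htk
            · have : t = kk := by
                apply Fin.ext
                simp only [hkk]
                omega
              rw [this, Function.update_self]
              exact h2
          · intro h
            constructor
            · intro t htk
              rw [h t (by omega), Function.update_of_ne]
              intro hh
              rw [hh] at htk
              simp [hkk] at htk
            · rw [h kk (by simp [hkk]), Function.update_self]
        rw [heq, ← Finset.mul_sum]
        calc (1 / (D.card : ℝ)) * ∑ σ ∈ (SS N A).filter
              (fun σ => ∀ t : Fin N, (t : ℕ) < k + 1 → σ t = Function.update ρ kk y t),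
              ∏ t ∈ univ.filter (fun t : Fin N => k + 1 ≤ (t : ℕ)), (1 : ℝ) / (Rv A σ t)
            ≤ (1 / (D.card : ℝ)) * 1 := by
              apply mul_le_mul_of_nonneg_left (ih (k + 1) (by omega) _)
              positivity
          _ = 1 / (D.card : ℝ) := mul_one _
      calc ∑ y ∈ D, ∑ σ ∈ T.filter (fun σ => σ kk = y), ((1 / (D.card : ℝ)) *
            ∏ t ∈ univ.filter (fun t : Fin N => k + 1 ≤ (t : ℕ)), (1 : ℝ) / (Rv A σ t))
          ≤ ∑ _y ∈ D, 1 / (D.card : ℝ) := Finset.sum_le_sum hbound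
        _ = (D.card : ℝ) * (1 / (D.card : ℝ)) := by rw [Finset.sum_const, nsmul_eq_mul]
        _ = (D.card : ℝ) / (D.card : ℝ) := by ring
        _ ≤ 1 := div_self_le_one _
    calc ∑ σ ∈ T, ∏ t ∈ univ.filter (fun t : Fin N => k ≤ (t : ℕ)), (1 : ℝ) / (Rv A σ t)
        = ∑ σ ∈ T, ((1 : ℝ) / (Rv A σ kk)) *
            ∏ t ∈ univ.filter (fun t : Fin N => k + 1 ≤ (t : ℕ)), (1 : ℝ) / (Rv A σ t) := by
          apply Finset.sum_congr rfl
          intro σ _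
          rw [hsplit, Finset.prod_insert hnotmem]
      _ = ∑ σ ∈ T, ((1 : ℝ) / (D.card : ℝ)) *
            ∏ t ∈ univ.filter (fun t : Fin N => k + 1 ≤ (t : ℕ)), (1 : ℝ) / (Rv A σ t) := by
          apply Finset.sum_congr rfl
          intro σ hσ
          rw [hRconst σ hσ]
      _ ≤ 1 := key

lemma kraft {N : ℕ} (A : Fin N → Finset (Fin N)) :
    ∑ σ ∈ SS N A, ∏ t : Fin N, (1 : ℝ) / (Rv A σ t) ≤ 1 := by
  classical
  have h := kraft_aux A N 0 (by omega) id
  have h1 : (SS N A).filter (fun σ => ∀ t : Fin N, (t : ℕ) < 0 → σ t = id t) = SS N A := by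
    apply Finset.filter_true_of_mem
    intro σ _ t ht
    omega
  have h2 : univ.filter (fun t : Fin N => 0 ≤ (t : ℕ)) = univ := by
    apply Finset.filter_true_of_mem
    intro t _
    omega
  rw [h1, h2] at h
  exact h

lemma Rv_pos {N : ℕ} {A : Fin N → Finset (Fin N)} {σ : Fin N → Fin N}
    (hσ : σ ∈ SS N A) (t : Fin N) : 1 ≤ Rv A σ t := by
  classical
  obtain ⟨hinj, hmem⟩ := mem_SS.1 hσ
  have : σ t ∈ (A t) \ (Finset.image σ (Finset.univ.filter (fun u => (u : ℕ) < (t : ℕ)))) := by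
    rw [Finset.mem_sdiff]
    refine ⟨hmem t, ?_⟩
    intro hcon
    obtain ⟨u, hu, hut⟩ := Finset.mem_image.1 hcon
    have : u = t := hinj hut
    rw [this] at hu
    simp at hu
  unfold Rv
  exact Finset.card_pos.2 ⟨σ t, this⟩

lemma prod_Rv_ge {N : ℕ} (A : Fin N → Finset (Fin N)) :
    (((SS N A).card : ℝ)) ^ ((SS N A).card) ≤ ∏ σ ∈ SS N A, ∏ t : Fin N, (Rv A σ t : ℝ) := by
  classical
  set p := (SS N A).card with hp
  rcases Nat.eq_zero_or_pos p with hp0 | hppos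
  · rw [hp0]
    have : SS N A = ∅ := Finset.card_eq_zero.1 hp0
    rw [this]
    simp
  have hL1 : ∀ σ ∈ SS N A, (1 : ℝ) ≤ ∏ t : Fin N, (Rv A σ t : ℝ) := by
    intro σ hσ
    calc (1:ℝ) = ∏ _t : Fin N, (1:ℝ) := by simp
      _ ≤ ∏ t : Fin N, (Rv A σ t : ℝ) := by
          apply Finset.prod_le_prod (fun i _ => zero_le_one)
          intro i _
          exact_mod_cast Rv_pos hσ i
  have hLpos : ∀ σ ∈ SS N A, (0 : ℝ) < ∏ t : Fin N, (Rv A σ t : ℝ) := fun σ hσ =>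
    lt_of_lt_of_le one_pos (hL1 σ hσ)
  -- AM-GM
  have hamgm := Real.geom_mean_le_arith_mean_weighted (SS N A)
      (fun _ => 1 / (p : ℝ)) (fun σ => 1 / ∏ t : Fin N, (Rv A σ t : ℝ))
      (fun σ _ => by positivity)
      (by rw [Finset.sum_const, nsmul_eq_mul, ← hp]; field_simp)
      (fun σ hσ => le_of_lt (by have := hLpos σ hσ; positivity))
  have hsum : ∑ σ ∈ SS N A, (1 / (p : ℝ)) * (1 / ∏ t : Fin N, (Rv A σ t : ℝ))
      ≤ (1 / (p : ℝ)) * 1 := by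
    rw [← Finset.mul_sum]
    apply mul_le_mul_of_nonneg_left _ (by positivity)
    have h := kraft A
    calc ∑ σ ∈ SS N A, (1 / ∏ t : Fin N, (Rv A σ t : ℝ))
        = ∑ σ ∈ SS N A, ∏ t : Fin N, (1 : ℝ) / (Rv A σ t) := by
          apply Finset.sum_congr rfl
          intro σ _
          rw [one_div, ← Finset.prod_inv_distrib]
          simp [one_div]
      _ ≤ 1 := h
  have hgm : ∏ σ ∈ SS N A, (1 / ∏ t : Fin N, (Rv A σ t : ℝ)) ^ (1 / (p : ℝ) : ℝ)
      ≤ 1 / (p : ℝ) := le_trans hamgm (by simpa using hsum)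
  -- rewrite LHS as (∏ z) ^ (1/p)
  have hprodz : ∏ σ ∈ SS N A, (1 / ∏ t : Fin N, (Rv A σ t : ℝ)) ^ (1 / (p : ℝ) : ℝ)
      = (∏ σ ∈ SS N A, (1 / ∏ t : Fin N, (Rv A σ t : ℝ))) ^ (1 / (p : ℝ) : ℝ) := by
    rw [← Real.finset_prod_rpow _ _ (fun σ hσ => le_of_lt (by have := hLpos σ hσ; positivity))]
  rw [hprodz] at hgm
  set Z := ∏ σ ∈ SS N A, (1 / ∏ t : Fin N, (Rv A σ t : ℝ)) with hZ
  have hZpos : 0 < Z := Finset.prod_pos (fun σ hσ => by have := hLpos σ hσ; positivity)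
  -- raise both sides to the p-th power
  have hppos' : (0 : ℝ) < p := by exact_mod_cast hppos
  have hZle : Z ≤ (1 / (p : ℝ)) ^ (p : ℕ) := by
    have e1 : (Z ^ ((1:ℝ) / (p:ℝ))) ^ (p:ℕ) ≤ (1 / (p : ℝ)) ^ (p : ℕ) :=
      pow_le_pow_left₀ (Real.rpow_nonneg (le_of_lt hZpos) _) hgm p
    have e2 : (Z ^ ((1:ℝ) / (p:ℝ))) ^ (p:ℕ) = Z := by
      rw [← Real.rpow_natCast (Z ^ ((1:ℝ) / (p:ℝ))) p, ← Real.rpow_mul (le_of_lt hZpos),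
        one_div, inv_mul_cancel₀ (ne_of_gt hppos'), Real.rpow_one]
    rw [← e2]
    exact e1
  -- conclude
  have hZeq : Z = 1 / ∏ σ ∈ SS N A, ∏ t : Fin N, (Rv A σ t : ℝ) := by
    rw [hZ, one_div, ← Finset.prod_inv_distrib]
    simp [one_div]
  have hPpos : 0 < ∏ σ ∈ SS N A, ∏ t : Fin N, (Rv A σ t : ℝ) :=
    Finset.prod_pos hLpos
  rw [hZeq] at hZle
  rw [one_div, one_div, inv_pow] at hZle
  exact (inv_le_inv₀ hPpos (by positivity)).1 hZle

def rk {N : ℕ} (T : Finset (Fin N)) (τ : Equiv.Perm (Fin N)) (x : Fin N) : ℕ :=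
  (T.filter (fun t => τ t < τ x)).card

lemma rk_lt {N : ℕ} {T : Finset (Fin N)} (τ : Equiv.Perm (Fin N)) {x : Fin N} (hx : x ∈ T) :
    rk T τ x < T.card := by
  have hsub : T.filter (fun t => τ t < τ x) ⊆ T.erase x := by
    intro t ht
    rw [Finset.mem_erase]
    obtain ⟨ht1, ht2⟩ := Finset.mem_filter.1 ht
    exact ⟨fun h => by subst h; exact lt_irrefl _ ht2, ht1⟩
  calc rk T τ x ≤ (T.erase x).card := Finset.card_le_card hsub
    _ < T.card := by
        rw [Finset.card_erase_of_mem hx]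
        have := Finset.card_pos.2 ⟨x, hx⟩
        omega

lemma rk_lt_rk {N : ℕ} {T : Finset (Fin N)} (τ : Equiv.Perm (Fin N)) {x y : Fin N}
    (hx : x ∈ T) (hxy : τ x < τ y) : rk T τ x < rk T τ y := by
  apply Finset.card_lt_card
  constructor
  · intro t ht
    obtain ⟨ht1, ht2⟩ := Finset.mem_filter.1 ht
    exact Finset.mem_filter.2 ⟨ht1, lt_trans ht2 hxy⟩
  · intro hcon
    have hxmem : x ∈ T.filter (fun t => τ t < τ y) := Finset.mem_filter.2 ⟨hx, hxy⟩
    have := hcon hxmem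
    exact lt_irrefl _ (Finset.mem_filter.1 this).2

lemma rk_injOn {N : ℕ} {T : Finset (Fin N)} (τ : Equiv.Perm (Fin N)) {x y : Fin N}
    (hx : x ∈ T) (hy : y ∈ T) (h : rk T τ x = rk T τ y) : x = y := by
  rcases lt_trichotomy (τ x) (τ y) with hc | hc | hc
  · exact absurd h (ne_of_lt (rk_lt_rk τ hx hc))
  · exact τ.injective hc
  · exact absurd h.symm (ne_of_lt (rk_lt_rk τ hy hc))

lemma ex_rk {N : ℕ} {T : Finset (Fin N)} (τ : Equiv.Perm (Fin N)) {s : ℕ} (hs : s < T.card) :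
    ∃ x, x ∈ T ∧ rk T τ x = s := by
  classical
  have himg : T.image (rk T τ) = Finset.range T.card := by
    apply Finset.eq_of_subset_of_card_le
    · intro s hs
      obtain ⟨x, hx, hxs⟩ := Finset.mem_image.1 hs
      rw [Finset.mem_range, ← hxs]
      exact rk_lt τ hx
    · rw [Finset.card_range, Finset.card_image_of_injOn]
      intro x hx y hy
      exact rk_injOn τ hx hy
  have : s ∈ T.image (rk T τ) := by rw [himg]; exact Finset.mem_range.2 hs
  obtain ⟨x, hx, hxs⟩ := Finset.mem_image.1 this
  exact ⟨x, hx, hxs⟩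

noncomputable def elt {N : ℕ} (hN : 0 < N) (T : Finset (Fin N)) (τ : Equiv.Perm (Fin N))
    (s : ℕ) : Fin N :=
  if h : ∃ x, x ∈ T ∧ rk T τ x = s then h.choose else ⟨0, hN⟩

lemma elt_spec {N : ℕ} (hN : 0 < N) {T : Finset (Fin N)} (τ : Equiv.Perm (Fin N)) {s : ℕ}
    (hs : s < T.card) : elt hN T τ s ∈ T ∧ rk T τ (elt hN T τ s) = s := by
  have h : ∃ x, x ∈ T ∧ rk T τ x = s := ex_rk τ hs
  rw [elt, dif_pos h]
  exact h.choose_spec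

lemma elt_unique {N : ℕ} (hN : 0 < N) {T : Finset (Fin N)} (τ : Equiv.Perm (Fin N)) {s : ℕ}
    (hs : s < T.card) {x : Fin N} (hx : x ∈ T) (hrx : rk T τ x = s) : x = elt hN T τ s := by
  obtain ⟨h1, h2⟩ := elt_spec hN τ hs
  exact rk_injOn τ hx h1 (by rw [hrx, h2])

lemma rk_swap {N : ℕ} {T : Finset (Fin N)} (τ : Equiv.Perm (Fin N)) {i x : Fin N}
    (hi : i ∈ T) (hx : x ∈ T) :
    rk T (Equiv.swap (τ i) (τ x) * τ) i = rk T τ x := by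
  classical
  unfold rk
  have happ : ∀ t, (Equiv.swap (τ i) (τ x) * τ) t = Equiv.swap (τ i) (τ x) (τ t) := fun t => rfl
  have happi : (Equiv.swap (τ i) (τ x) * τ) i = τ x := by
    rw [happ, Equiv.swap_apply_left]
  apply Finset.card_nbij' (fun t => Equiv.swap i x t) (fun t => Equiv.swap i x t)
  · intro t ht
    obtain ⟨ht1, ht2⟩ := Finset.mem_filter.1 ht
    rw [happi, happ] at ht2
    apply Finset.mem_filter.2
    beta_reduce
    by_cases hti : t = i
    · subst hti
      rw [Equiv.swap_apply_left] at ht2 ⊢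
      exact absurd ht2 (lt_irrefl _)
    by_cases htx : t = x
    · subst htx
      rw [Equiv.swap_apply_right] at ht2 ⊢
      exact ⟨hi, ht2⟩
    · rw [Equiv.swap_apply_of_ne_of_ne hti htx]
      rw [Equiv.swap_apply_of_ne_of_ne (fun h => hti (τ.injective h))
        (fun h => htx (τ.injective h))] at ht2
      exact ⟨ht1, ht2⟩
  · intro t ht
    obtain ⟨ht1, ht2⟩ := Finset.mem_filter.1 ht
    apply Finset.mem_filter.2
    beta_reduce
    rw [happi]
    by_cases hti : t = i
    · subst hti
      rw [Equiv.swap_apply_left]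
      rw [happ, Equiv.swap_apply_right]
      exact ⟨hx, ht2⟩
    by_cases htx : t = x
    · subst htx
      exact absurd ht2 (lt_irrefl _)
    · rw [Equiv.swap_apply_of_ne_of_ne hti htx]
      rw [happ, Equiv.swap_apply_of_ne_of_ne (fun h => hti (τ.injective h))
        (fun h => htx (τ.injective h))]
      exact ⟨ht1, ht2⟩
  · intro t _; exact Equiv.swap_apply_self _ _ _
  · intro t _; exact Equiv.swap_apply_self _ _ _

lemma fiber_card_eq {N : ℕ} (hN : 0 < N) {T : Finset (Fin N)} {i : Fin N} (hi : i ∈ T)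
    {s s' : ℕ} (hs : s < T.card) (hs' : s' < T.card) :
    ((univ : Finset (Equiv.Perm (Fin N))).filter (fun τ => rk T τ i = s)).card =
      ((univ : Finset (Equiv.Perm (Fin N))).filter (fun τ => rk T τ i = s')).card := by
  classical
  apply Finset.card_nbij'
    (fun τ => Equiv.swap (τ i) (τ (elt hN T τ s')) * τ)
    (fun τ => Equiv.swap (τ i) (τ (elt hN T τ s)) * τ)
  · intro τ hτ
    simp only [Finset.mem_coe, Finset.mem_filter, Finset.mem_univ, true_and] at hτ ⊢
    rw [rk_swap τ hi (elt_spec hN τ hs').1]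
    exact (elt_spec hN τ hs').2
  · intro τ hτ
    simp only [Finset.mem_coe, Finset.mem_filter, Finset.mem_univ, true_and] at hτ ⊢
    rw [rk_swap τ hi (elt_spec hN τ hs).1]
    exact (elt_spec hN τ hs).2
  · intro τ hτ
    simp only [Finset.mem_coe, Finset.mem_filter, Finset.mem_univ, true_and] at hτ
    beta_reduce
    set x := elt hN T τ s' with hxdef
    set τ' := Equiv.swap (τ i) (τ x) * τ with hτ'def
    have hxT : x ∈ T := (elt_spec hN τ hs').1
    have hrx : rk T τ' x = s := by
      have : τ' = Equiv.swap (τ x) (τ i) * τ := by rw [hτ'def, Equiv.swap_comm]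
      rw [this, rk_swap τ hxT hi, hτ]
    have hx' : x = elt hN T τ' s := elt_unique hN τ' hs hxT hrx
    have hτ'i : τ' i = τ x := by
      rw [hτ'def]; exact Equiv.swap_apply_left _ _
    have hτ'x : τ' x = τ i := by
      rw [hτ'def]
      show Equiv.swap (τ i) (τ x) (τ x) = τ i
      exact Equiv.swap_apply_right _ _
    rw [← hx', hτ'i, hτ'x, hτ'def, ← mul_assoc, Equiv.swap_comm (τ x) (τ i),
      Equiv.swap_mul_self, one_mul]
  · intro τ hτ
    simp only [Finset.mem_coe, Finset.mem_filter, Finset.mem_univ, true_and] at hτ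
    beta_reduce
    set x := elt hN T τ s with hxdef
    set τ' := Equiv.swap (τ i) (τ x) * τ with hτ'def
    have hxT : x ∈ T := (elt_spec hN τ hs).1
    have hrx : rk T τ' x = s' := by
      have : τ' = Equiv.swap (τ x) (τ i) * τ := by rw [hτ'def, Equiv.swap_comm]
      rw [this, rk_swap τ hxT hi, hτ]
    have hx' : x = elt hN T τ' s' := elt_unique hN τ' hs' hxT hrx
    have hτ'i : τ' i = τ x := by
      rw [hτ'def]; exact Equiv.swap_apply_left _ _
    have hτ'x : τ' x = τ i := by
      rw [hτ'def]
      show Equiv.swap (τ i) (τ x) (τ x) = τ i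
      exact Equiv.swap_apply_right _ _
    rw [← hx', hτ'i, hτ'x, hτ'def, ← mul_assoc, Equiv.swap_comm (τ x) (τ i),
      Equiv.swap_mul_self, one_mul]

lemma prod_range_sub_eq_factorial (m : ℕ) : ∏ s ∈ Finset.range m, (m - s) = m.factorial := by
  induction m with
  | zero => simp
  | succ m ih =>
    rw [Finset.prod_range_succ']
    have h1 : ∏ s ∈ Finset.range m, (m + 1 - (s + 1)) = ∏ s ∈ Finset.range m, (m - s) :=
      Finset.prod_congr rfl (fun s hs => by omega)
    rw [h1, ih, Nat.factorial_succ, Nat.sub_zero, mul_comm]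

lemma prod_rank_factor {N : ℕ} (hN : 0 < N) (T : Finset (Fin N)) {i : Fin N} (hi : i ∈ T) :
    ∏ τ : Equiv.Perm (Fin N), ((T.card - rk T τ i : ℕ) : ℝ)
      = ((T.card.factorial : ℝ)) ^ (N.factorial / T.card) := by
  classical
  set m := T.card with hm
  have hmpos : 0 < m := Finset.card_pos.2 ⟨i, hi⟩
  set c := ((univ : Finset (Equiv.Perm (Fin N))).filter (fun τ => rk T τ i = 0)).card with hc
  have hfib : ∀ s ∈ Finset.range m,
      ((univ : Finset (Equiv.Perm (Fin N))).filter (fun τ => rk T τ i = s)).card = c :=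
    fun s hs => fiber_card_eq hN hi (Finset.mem_range.1 hs) hmpos
  have hmapsto : ∀ τ ∈ (univ : Finset (Equiv.Perm (Fin N))), rk T τ i ∈ Finset.range m :=
    fun τ _ => Finset.mem_range.2 (rk_lt τ hi)
  have hsplit := Finset.prod_fiberwise_of_maps_to hmapsto
    (fun τ => ((m - rk T τ i : ℕ) : ℝ))
  rw [← hsplit]
  have hinner : ∀ s ∈ Finset.range m,
      ∏ τ ∈ (univ : Finset (Equiv.Perm (Fin N))).filter (fun τ => rk T τ i = s),
        ((m - rk T τ i : ℕ) : ℝ) = ((m - s : ℕ) : ℝ) ^ c := by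
    intro s hs
    rw [Finset.prod_congr rfl (fun τ hτ => by
      rw [(Finset.mem_filter.1 hτ).2]), Finset.prod_const, hfib s hs]
  rw [Finset.prod_congr rfl hinner, Finset.prod_pow]
  have hcast : ∏ x ∈ Finset.range m, ((m - x : ℕ) : ℝ) = ((m.factorial : ℕ) : ℝ) := by
    rw [← Nat.cast_prod, prod_range_sub_eq_factorial]
  rw [hcast]
  congr 1
  have hpart : ∑ s ∈ Finset.range m,
      ((univ : Finset (Equiv.Perm (Fin N))).filter (fun τ => rk T τ i = s)).card =
      (univ : Finset (Equiv.Perm (Fin N))).card :=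
    (Finset.card_eq_sum_card_fiberwise hmapsto).symm
  rw [Finset.sum_congr rfl hfib, Finset.sum_const, smul_eq_mul, Finset.card_univ,
    Fintype.card_perm, Fintype.card_fin] at hpart
  rw [Finset.card_range] at hpart
  rw [← hpart, Nat.mul_div_cancel_left c hmpos]

lemma sigma_bijective {N : ℕ} {A : Fin N → Finset (Fin N)} {σ : Fin N → Fin N}
    (hσ : σ ∈ SS N A) : Function.Bijective σ :=
  (Finite.injective_iff_bijective).1 (mem_SS.1 hσ).1

lemma Tcard {N m : ℕ} {A : Fin N → Finset (Fin N)} (hA : ∀ k, (A k).card = m)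
    {σ : Fin N → Fin N} (hσ : σ ∈ SS N A) (k : Fin N) :
    ((univ : Finset (Fin N)).filter (fun t => σ t ∈ A k)).card = m := by
  classical
  have hbij := sigma_bijective hσ
  have himg : Finset.image σ ((univ : Finset (Fin N)).filter (fun t => σ t ∈ A k)) = A k := by
    ext y
    simp only [Finset.mem_image, Finset.mem_filter, Finset.mem_univ, true_and]
    constructor
    · rintro ⟨t, ht, rfl⟩; exact ht
    · intro hy
      obtain ⟨t, rfl⟩ := hbij.2 y
      exact ⟨t, hy, rfl⟩
  have h2 : ((univ : Finset (Fin N)).filter (fun t => σ t ∈ A k)).card = (A k).card := by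
    conv_rhs => rw [← himg]
    exact (Finset.card_image_of_injective _ hbij.1).symm
  rw [h2, hA k]

lemma Rv_perm {N : ℕ} (A : Fin N → Finset (Fin N)) {σ : Fin N → Fin N}
    (hσ : σ ∈ SS N A) (τ : Equiv.Perm (Fin N)) (k : Fin N) :
    Rv (fun t => A (τ.symm t)) (σ ∘ ⇑τ.symm) (τ k)
      = (A k).card - rk ((univ : Finset (Fin N)).filter (fun t => σ t ∈ A k)) τ k := by
  classical
  have hinj := (mem_SS.1 hσ).1
  unfold Rv
  simp only [Equiv.symm_apply_apply]
  have himg : Finset.image (σ ∘ ⇑τ.symm)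
      ((univ : Finset (Fin N)).filter (fun u => (u : ℕ) < ((τ k : Fin N) : ℕ)))
      = Finset.image σ ((univ : Finset (Fin N)).filter (fun t => τ t < τ k)) := by
    rw [← Finset.image_image]
    congr 1
    ext t
    simp only [Finset.mem_image, Finset.mem_filter, Finset.mem_univ, true_and]
    constructor
    · rintro ⟨u, hu, rfl⟩
      rw [Fin.lt_def]
      simpa using hu
    · intro ht
      exact ⟨τ t, by rw [Fin.lt_def] at ht; simpa using ht, by simp⟩
  rw [himg]
  -- cardinality computation
  have hsd : ((A k) \ Finset.image σ ((univ : Finset (Fin N)).filter (fun t => τ t < τ k))).card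
      = (A k).card - ((A k) ∩ Finset.image σ
          ((univ : Finset (Fin N)).filter (fun t => τ t < τ k))).card := by
    have := Finset.card_inter_add_card_sdiff (A k)
      (Finset.image σ ((univ : Finset (Fin N)).filter (fun t => τ t < τ k)))
    omega
  rw [hsd]
  congr 1
  have hinter : (A k) ∩ Finset.image σ ((univ : Finset (Fin N)).filter (fun t => τ t < τ k))
      = Finset.image σ (((univ : Finset (Fin N)).filter (fun t => σ t ∈ A k)).filter
          (fun t => τ t < τ k)) := by
    ext y
    simp only [Finset.mem_inter, Finset.mem_image, Finset.mem_filter, Finset.mem_univ, true_and]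
    constructor
    · rintro ⟨hy, t, ht, rfl⟩
      exact ⟨t, ⟨hy, ht⟩, rfl⟩
    · rintro ⟨t, ⟨h1, h2⟩, rfl⟩
      exact ⟨h1, t, h2, rfl⟩
  rw [hinter, Finset.card_image_of_injective _ hinj]
  rfl

theorem bregman_uniform {N m : ℕ} (hN : 0 < N) (hm : 0 < m) (A : Fin N → Finset (Fin N))
    (hA : ∀ k, (A k).card = m) :
    ((SS N A).card : ℝ) ≤ (m.factorial : ℝ) ^ ((N : ℝ) / (m : ℝ)) := by
  classical
  set p := (SS N A).card with hp
  have hbfac : (0:ℝ) ≤ (m.factorial : ℝ) := by positivity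
  rcases Nat.eq_zero_or_pos p with hp0 | hppos
  · rw [hp0]
    exact_mod_cast Real.rpow_nonneg hbfac _
  have hmN : m ≤ N := by
    have k0 : Fin N := ⟨0, hN⟩
    rw [← hA k0]
    exact le_trans (Finset.card_le_card (Finset.subset_univ _)) (by simp)
  -- Step 1: for each ordering τ
  have h1 : ∀ τ : Equiv.Perm (Fin N), ((p:ℝ))^p ≤
      ∏ σ ∈ SS N A, ∏ k : Fin N,
        ((m - rk ((univ : Finset (Fin N)).filter (fun t => σ t ∈ A k)) τ k : ℕ) : ℝ) := by
    intro τ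
    set A' : Fin N → Finset (Fin N) := fun t => A (τ.symm t) with hA'
    have hcard : (SS N A').card = p := by
      rw [hp]
      apply Finset.card_nbij' (fun σ => σ ∘ ⇑τ) (fun σ => σ ∘ ⇑τ.symm)
      · intro σ hσ
        obtain ⟨hi, hmem⟩ := mem_SS.1 hσ
        apply mem_SS.2
        exact ⟨hi.comp τ.injective, fun k => by simpa [hA'] using hmem (τ k)⟩
      · intro σ hσ
        obtain ⟨hi, hmem⟩ := mem_SS.1 hσ
        apply mem_SS.2
        refine ⟨hi.comp τ.symm.injective, fun k => ?_⟩
        have := hmem (τ.symm k)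
        simpa [hA'] using this
      · intro σ _; ext t; simp
      · intro σ _; ext t; simp
    have hb := prod_Rv_ge A'
    rw [hcard] at hb
    refine le_trans hb (le_of_eq ?_)
    refine Finset.prod_nbij' (fun σ' => σ' ∘ ⇑τ) (fun σ => σ ∘ ⇑τ.symm) ?_ ?_ ?_ ?_ ?_
    · intro σ hσ
      obtain ⟨hi, hmem⟩ := mem_SS.1 hσ
      apply mem_SS.2
      exact ⟨hi.comp τ.injective, fun k => by simpa [hA'] using hmem (τ k)⟩
    · intro σ hσ
      obtain ⟨hi, hmem⟩ := mem_SS.1 hσ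
      apply mem_SS.2
      refine ⟨hi.comp τ.symm.injective, fun k => ?_⟩
      have := hmem (τ.symm k)
      simpa [hA'] using this
    · intro σ _; ext t; simp
    · intro σ _; ext t; simp
    · intro σ' hσ'
      have hσmem : σ' ∘ ⇑τ ∈ SS N A := by
        obtain ⟨hi, hmem⟩ := mem_SS.1 hσ'
        apply mem_SS.2
        exact ⟨hi.comp τ.injective, fun k => by simpa [hA'] using hmem (τ k)⟩
      have heq : (σ' ∘ ⇑τ) ∘ ⇑τ.symm = σ' := by ext t; simp
      rw [← Equiv.prod_comp τ (fun t => ((Rv A' σ' t : ℕ) : ℝ))]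
      apply Finset.prod_congr rfl
      intro k _
      have hrv := Rv_perm A hσmem τ k
      rw [heq] at hrv
      rw [hrv, hA k]
  -- Step 2: combine over all τ
  have h2 : ((p:ℝ))^(p * N.factorial) ≤
      ((m.factorial : ℝ) ^ (N.factorial / m)) ^ (N * p) := by
    have hprod : ∏ _τ : Equiv.Perm (Fin N), ((p:ℝ))^p ≤
        ∏ τ : Equiv.Perm (Fin N), ∏ σ ∈ SS N A, ∏ k : Fin N,
          ((m - rk ((univ : Finset (Fin N)).filter (fun t => σ t ∈ A k)) τ k : ℕ) : ℝ) := by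
      apply Finset.prod_le_prod
      · intro τ _; positivity
      · intro τ _; exact h1 τ
    have hl : ∏ _τ : Equiv.Perm (Fin N), ((p:ℝ))^p = ((p:ℝ))^(p * N.factorial) := by
      rw [Finset.prod_const, Finset.card_univ, Fintype.card_perm, Fintype.card_fin, ← pow_mul]
    have hr : ∏ τ : Equiv.Perm (Fin N), ∏ σ ∈ SS N A, ∏ k : Fin N,
          ((m - rk ((univ : Finset (Fin N)).filter (fun t => σ t ∈ A k)) τ k : ℕ) : ℝ)
        = ((m.factorial : ℝ) ^ (N.factorial / m)) ^ (N * p) := by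
      rw [Finset.prod_comm]
      have hσ : ∀ σ ∈ SS N A, ∏ τ : Equiv.Perm (Fin N), ∏ k : Fin N,
          ((m - rk ((univ : Finset (Fin N)).filter (fun t => σ t ∈ A k)) τ k : ℕ) : ℝ)
          = ((m.factorial : ℝ) ^ (N.factorial / m)) ^ N := by
        intro σ hσ
        rw [Finset.prod_comm]
        have hk : ∀ k : Fin N, ∏ τ : Equiv.Perm (Fin N),
            ((m - rk ((univ : Finset (Fin N)).filter (fun t => σ t ∈ A k)) τ k : ℕ) : ℝ)
            = (m.factorial : ℝ) ^ (N.factorial / m) := by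
          intro k
          have hkT : k ∈ (univ : Finset (Fin N)).filter (fun t => σ t ∈ A k) := by
            simp only [Finset.mem_filter, Finset.mem_univ, true_and]
            exact (mem_SS.1 hσ).2 k
          have := prod_rank_factor hN ((univ : Finset (Fin N)).filter (fun t => σ t ∈ A k)) hkT
          rw [Tcard hA hσ k] at this
          exact this
        calc ∏ k : Fin N, ∏ τ : Equiv.Perm (Fin N),
              ((m - rk ((univ : Finset (Fin N)).filter (fun t => σ t ∈ A k)) τ k : ℕ) : ℝ)
            = ∏ _k : Fin N, ((m.factorial : ℝ) ^ (N.factorial / m)) :=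
              Finset.prod_congr rfl (fun k _ => hk k)
          _ = ((m.factorial : ℝ) ^ (N.factorial / m)) ^ N := by
              rw [Finset.prod_const, Finset.card_univ, Fintype.card_fin]
      calc ∏ σ ∈ SS N A, ∏ τ : Equiv.Perm (Fin N), ∏ k : Fin N,
            ((m - rk ((univ : Finset (Fin N)).filter (fun t => σ t ∈ A k)) τ k : ℕ) : ℝ)
          = ∏ _σ ∈ SS N A, ((m.factorial : ℝ) ^ (N.factorial / m)) ^ N := by
            apply Finset.prod_congr rfl
            intro σ hσ'
            exact hσ σ hσ'
        _ = (((m.factorial : ℝ) ^ (N.factorial / m)) ^ N) ^ p := by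
            rw [Finset.prod_const, hp]
        _ = ((m.factorial : ℝ) ^ (N.factorial / m)) ^ (N * p) := by rw [← pow_mul]
    rw [← hl, ← hr]
    exact hprod
  -- Step 3: extract the bound
  have hdvd : m ∣ N.factorial := Nat.dvd_factorial hm hmN
  set q := N.factorial / m with hq
  have hqm : q * m = N.factorial := Nat.div_mul_cancel hdvd
  have hqpos : 0 < q := by
    rcases Nat.eq_zero_or_pos q with h | h
    · rw [h] at hqm; simp at hqm; exact absurd hqm.symm (Nat.factorial_ne_zero N)
    · exact h
  have h3 : ((p:ℝ))^(N.factorial) ≤ (m.factorial : ℝ) ^ (q * N) := by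
    have e1 : ((p:ℝ))^(p * N.factorial) = (((p:ℝ))^(N.factorial))^p := by
      rw [← pow_mul, Nat.mul_comm]
    have e2 : ((m.factorial : ℝ) ^ q) ^ (N * p) = ((m.factorial : ℝ) ^ (q * N)) ^ p := by
      rw [← pow_mul, ← pow_mul, Nat.mul_assoc]
    rw [e1, e2] at h2
    exact (pow_le_pow_iff_left₀ (by positivity) (by positivity) (by omega)).1 h2
  -- take N!-th root via rpow
  have hNfpos : (0:ℝ) < (N.factorial : ℕ) := by exact_mod_cast N.factorial_pos
  have h4 := Real.rpow_le_rpow (by positivity) h3 (le_of_lt (one_div_pos.2 hNfpos))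
  have e3 : (((p:ℝ))^(N.factorial : ℕ)) ^ ((1:ℝ) / (N.factorial : ℕ)) = (p:ℝ) := by
    rw [← Real.rpow_natCast ((p:ℝ)) (N.factorial), ← Real.rpow_mul (by positivity), one_div,
      mul_inv_cancel₀ (ne_of_gt hNfpos), Real.rpow_one]
  have e4 : (((m.factorial:ℝ))^(q * N : ℕ)) ^ ((1:ℝ) / (N.factorial : ℕ))
      = (m.factorial : ℝ) ^ ((N:ℝ)/(m:ℝ)) := by
    rw [← Real.rpow_natCast ((m.factorial:ℝ)) (q * N), ← Real.rpow_mul (by positivity)]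
    congr 1
    have hNf : ((N.factorial : ℕ) : ℝ) = (q : ℝ) * (m : ℝ) := by exact_mod_cast hqm.symm
    rw [one_div, ← div_eq_mul_inv]
    push_cast
    rw [hNf]
    have hq0 : (q:ℝ) ≠ 0 := by
      have : (0:ℝ) < (q:ℝ) := by exact_mod_cast hqpos
      exact ne_of_gt this
    rw [mul_div_mul_left _ _ hq0]
  rw [e3, e4] at h4
  exact h4

def mkn (n k : ℕ) : ℕ := if k % n ≤ k / n then n ^ 2 - k else n ^ 2 - (k % n) * n

noncomputable def Bk (n k : ℕ) : ℝ :=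
  ((mkn n k).factorial : ℝ) ^ (((n ^ 2 : ℕ) : ℝ) / ((mkn n k : ℕ) : ℝ))

lemma Bk_nonneg (n k : ℕ) : 0 ≤ Bk n k := Real.rpow_nonneg (by positivity) _

lemma mkn_pos {n k : ℕ} (hn : 0 < n) (hk : k < n ^ 2) : 0 < mkn n k := by
  unfold mkn
  split
  · omega
  · have h1 : (k % n) * n < n * n := by
      apply Nat.mul_lt_mul_of_lt_of_le (Nat.mod_lt _ hn) (le_refl n) hn
    have h2 : n ^ 2 = n * n := sq n
    omega

noncomputable def PB (n k : ℕ) : Finset (Fin (n ^ 2) × Fin (n ^ 2) → Fin (n ^ 2)) :=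
  @Finset.filter _ (fun f =>
    (∀ p q : Fin (n ^ 2) × Fin (n ^ 2), p.1 = q.1 → (p.1 : ℕ) < k → f p = f q → p = q) ∧
    (∀ p q : Fin (n ^ 2) × Fin (n ^ 2), p.2 = q.2 → (p.1 : ℕ) < k → (q.1 : ℕ) < k →
      f p = f q → p = q) ∧
    (∀ p q : Fin (n ^ 2) × Fin (n ^ 2), (p.1 : ℕ) / n = (q.1 : ℕ) / n →
      (p.2 : ℕ) / n = (q.2 : ℕ) / n → (p.1 : ℕ) < k → (q.1 : ℕ) < k → f p = f q → p = q) ∧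
    (∀ p : Fin (n ^ 2) × Fin (n ^ 2), k ≤ (p.1 : ℕ) → f p = p.2))
    (Classical.decPred _) Finset.univ

lemma mem_PB {n k : ℕ} {f : Fin (n ^ 2) × Fin (n ^ 2) → Fin (n ^ 2)} :
    f ∈ PB n k ↔
    (∀ p q : Fin (n ^ 2) × Fin (n ^ 2), p.1 = q.1 → (p.1 : ℕ) < k → f p = f q → p = q) ∧
    (∀ p q : Fin (n ^ 2) × Fin (n ^ 2), p.2 = q.2 → (p.1 : ℕ) < k → (q.1 : ℕ) < k →
      f p = f q → p = q) ∧
    (∀ p q : Fin (n ^ 2) × Fin (n ^ 2), (p.1 : ℕ) / n = (q.1 : ℕ) / n →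
      (p.2 : ℕ) / n = (q.2 : ℕ) / n → (p.1 : ℕ) < k → (q.1 : ℕ) < k → f p = f q → p = q) ∧
    (∀ p : Fin (n ^ 2) × Fin (n ^ 2), k ≤ (p.1 : ℕ) → f p = p.2) := by
  simp [PB]

lemma card_filter_band {N : ℕ} (a b : ℕ) (hb : a + b ≤ N) :
    ((Finset.univ : Finset (Fin N)).filter
      (fun r : Fin N => a ≤ (r : ℕ) ∧ (r : ℕ) < a + b)).card = b := by
  classical
  have himg : Finset.image Fin.val ((Finset.univ : Finset (Fin N)).filter
      (fun r : Fin N => a ≤ (r : ℕ) ∧ (r : ℕ) < a + b)) = Finset.Ico a (a + b) := by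
    ext y
    simp only [Finset.mem_image, Finset.mem_filter, Finset.mem_univ, true_and,
      Finset.mem_Ico]
    constructor
    · rintro ⟨r, ⟨h1, h2⟩, rfl⟩; exact ⟨h1, h2⟩
    · rintro ⟨h1, h2⟩
      exact ⟨⟨y, lt_of_lt_of_le h2 hb⟩, ⟨h1, h2⟩, rfl⟩
  calc ((Finset.univ : Finset (Fin N)).filter
      (fun r : Fin N => a ≤ (r : ℕ) ∧ (r : ℕ) < a + b)).card
      = (Finset.image Fin.val ((Finset.univ : Finset (Fin N)).filter
          (fun r : Fin N => a ≤ (r : ℕ) ∧ (r : ℕ) < a + b))).card :=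
        (Finset.card_image_of_injective _ Fin.val_injective).symm
    _ = (Finset.Ico a (a + b)).card := by rw [himg]
    _ = b := by rw [Nat.card_Ico]; omega

lemma card_filter_lt {N : ℕ} (k : ℕ) (hk : k ≤ N) :
    ((Finset.univ : Finset (Fin N)).filter (fun r : Fin N => (r : ℕ) < k)).card = k := by
  have h := card_filter_band (N := N) 0 k (by omega)
  simpa using h

lemma PB_step (n : ℕ) (hn : 1 ≤ n) {k : ℕ} (hk : k < n ^ 2) :
    ((PB n (k + 1)).card : ℝ) ≤ ((PB n k).card : ℝ) * Bk n k := by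
  classical
  have hnpos : 0 < n := hn
  have hN1 : 0 < n ^ 2 := by positivity
  set i := k / n with hi
  set j := k % n with hj
  have hjn : j < n := Nat.mod_lt _ hnpos
  have hij : i * n + j = k := by
    rw [hi, hj, mul_comm]
    exact Nat.div_add_mod k n
  set kk : Fin (n ^ 2) := ⟨k, hk⟩ with hkk
  set ψ : (Fin (n ^ 2) × Fin (n ^ 2) → Fin (n ^ 2)) →
      (Fin (n ^ 2) × Fin (n ^ 2) → Fin (n ^ 2)) :=
    fun f p => if (p.1 : ℕ) < k then f p else p.2 with hψ
  have hmaps : ∀ f ∈ PB n (k + 1), ψ f ∈ PB n k := by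
    intro f hf
    obtain ⟨c1, c2, c3, c4⟩ := mem_PB.1 hf
    apply mem_PB.2
    refine ⟨?_, ?_, ?_, ?_⟩
    · intro p q hpq hpk hfe
      have hqk : (q.1 : ℕ) < k := by rw [← hpq]; exact hpk
      rw [hψ] at hfe
      simp only [if_pos hpk, if_pos hqk] at hfe
      exact c1 p q hpq (by omega) hfe
    · intro p q hpq hpk hqk hfe
      rw [hψ] at hfe
      simp only [if_pos hpk, if_pos hqk] at hfe
      exact c2 p q hpq (by omega) (by omega) hfe
    · intro p q h1 h2 hpk hqk hfe
      rw [hψ] at hfe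
      simp only [if_pos hpk, if_pos hqk] at hfe
      exact c3 p q h1 h2 (by omega) (by omega) hfe
    · intro p hp
      rw [hψ]
      simp only [Nat.not_lt.2 hp, if_neg (Nat.not_lt.2 hp)]
      simp [Nat.not_lt.2 hp]
  have hcard := Finset.card_eq_sum_card_fiberwise hmaps
  -- the fiber bound
  have hfiber : ∀ g ∈ PB n k,
      (((PB n (k + 1)).filter (fun f => ψ f = g)).card : ℝ) ≤ Bk n k := by
    intro g hg
    obtain ⟨g1, g2, g3, g4⟩ := mem_PB.1 hg
    set Ag : Fin (n ^ 2) → Finset (Fin (n ^ 2)) := fun c =>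
      if j ≤ i then
        Finset.univ \ (Finset.image (fun r : Fin (n ^ 2) => g (r, c))
          (Finset.univ.filter (fun r : Fin (n ^ 2) => (r : ℕ) < k)))
      else
        Finset.univ \ (Finset.image g
          ((Finset.univ.filter (fun r : Fin (n ^ 2) => (r : ℕ) < k ∧ (r : ℕ) / n = i)) ×ˢ
           (Finset.univ.filter (fun c' : Fin (n ^ 2) => (c' : ℕ) / n = (c : ℕ) / n)))) with hAg
    have hAcard : ∀ c, (Ag c).card = mkn n k := by
      intro c
      rw [hAg]
      by_cases hji : j ≤ i
      · simp only [if_pos hji]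
        rw [Finset.card_sdiff_of_subset (Finset.subset_univ _), Finset.card_univ, Fintype.card_fin]
        rw [Finset.card_image_of_injOn, card_filter_lt k (le_of_lt hk)]
        · unfold mkn
          rw [if_pos (by rw [← hi, ← hj]; exact hji)]
        · intro r hr r' hr' hre
          have hrk : (r : ℕ) < k := by simpa using (Finset.mem_filter.1 hr).2
          have hrk' : (r' : ℕ) < k := by simpa using (Finset.mem_filter.1 hr').2
          have := g2 (r, c) (r', c) rfl hrk hrk' hre
          exact congrArg Prod.fst this
      · simp only [if_neg hji]
        rw [Finset.card_sdiff_of_subset (Finset.subset_univ _), Finset.card_univ, Fintype.card_fin]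
        have himg : (Finset.image g
            ((Finset.univ.filter (fun r : Fin (n ^ 2) => (r : ℕ) < k ∧ (r : ℕ) / n = i)) ×ˢ
             (Finset.univ.filter (fun c' : Fin (n ^ 2) => (c' : ℕ) / n = (c : ℕ) / n)))).card
            = j * n := by
          rw [Finset.card_image_of_injOn]
          · rw [Finset.card_product]
            congr 1
            · -- rows: count = j
              have hcongr : (Finset.univ.filter
                  (fun r : Fin (n ^ 2) => (r : ℕ) < k ∧ (r : ℕ) / n = i)) =
                  (Finset.univ.filter
                  (fun r : Fin (n ^ 2) => i * n ≤ (r : ℕ) ∧ (r : ℕ) < i * n + j)) := by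
                apply Finset.filter_congr
                intro r _
                constructor
                · rintro ⟨h1, h2⟩
                  refine ⟨?_, by omega⟩
                  calc i * n = (r : ℕ) / n * n := by rw [h2]
                    _ ≤ (r : ℕ) := Nat.div_mul_le_self _ _
                · rintro ⟨h1, h2⟩
                  refine ⟨by omega, ?_⟩
                  apply Nat.div_eq_of_lt_le (by rw [mul_comm] at h1 ⊢; exact h1)
                  calc (r : ℕ) < i * n + j := h2
                    _ ≤ i * n + n := by omega
                    _ = (i + 1) * n := by ring
              rw [hcongr, card_filter_band (i * n) j (by omega)]
            · -- cols: count = n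
              set b := (c : ℕ) / n with hb
              have hbn : b < n := by
                rw [hb]
                apply Nat.div_lt_iff_lt_mul hnpos |>.2
                have := c.isLt
                calc (c : ℕ) < n ^ 2 := c.isLt
                  _ = n * n := sq n
              have hcongr : (Finset.univ.filter
                  (fun c' : Fin (n ^ 2) => (c' : ℕ) / n = b)) =
                  (Finset.univ.filter
                  (fun c' : Fin (n ^ 2) => b * n ≤ (c' : ℕ) ∧ (c' : ℕ) < b * n + n)) := by
                apply Finset.filter_congr
                intro c' _
                constructor
                · intro h1
                  constructor
                  · calc b * n = (c' : ℕ) / n * n := by rw [h1]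
                      _ ≤ (c' : ℕ) := Nat.div_mul_le_self _ _
                  · have h2 := Nat.mod_lt (c' : ℕ) hnpos
                    have h3 := Nat.div_add_mod (c' : ℕ) n
                    have h5 : b * n = n * ((c' : ℕ) / n) := by rw [h1, mul_comm]
                    omega
                · rintro ⟨h1, h2⟩
                  apply Nat.div_eq_of_lt_le (by rw [mul_comm] at h1 ⊢; exact h1)
                  calc (c' : ℕ) < b * n + n := h2
                    _ = (b + 1) * n := by ring

              rw [hcongr, card_filter_band (b * n) n ?_]
              have h4 : b + 1 ≤ n := hbn
              calc b * n + n = (b + 1) * n := by ring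
                _ ≤ n * n := Nat.mul_le_mul_right n h4
                _ = n ^ 2 := (sq n).symm
          · intro p hp q hq hpq
            simp only [Finset.mem_coe, Finset.mem_product, Finset.mem_filter,
              Finset.mem_univ, true_and] at hp hq
            exact g3 p q (by omega) (by omega) hp.1.1 hq.1.1 hpq
        rw [himg]
        unfold mkn
        rw [if_neg (by rw [← hi, ← hj]; exact hji), ← hj]
    -- injection into SS
    have hinj : (((PB n (k + 1)).filter (fun f => ψ f = g)).card : ℕ)
        ≤ (SS (n ^ 2) Ag).card := by
      apply Finset.card_le_card_of_injOn (fun f => fun c => f (kk, c))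
      · intro f hf
        obtain ⟨hfPB, hfψ⟩ := Finset.mem_filter.1 hf
        obtain ⟨c1, c2, c3, c4⟩ := mem_PB.1 hfPB
        apply mem_SS.2
        constructor
        · intro c c' hcc
          have := c1 (kk, c) (kk, c') rfl (Nat.lt_succ_self k) hcc
          exact congrArg Prod.snd this
        · intro c
          rw [hAg]
          by_cases hji : j ≤ i
          · simp only [if_pos hji, Finset.mem_sdiff, Finset.mem_univ, true_and]
            intro hcon
            obtain ⟨r, hr, hre⟩ := Finset.mem_image.1 hcon
            have hrk : (r : ℕ) < k := by simpa using (Finset.mem_filter.1 hr).2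
            have hgr : g (r, c) = f (r, c) := by
              rw [← hfψ, hψ]
              simp only [if_pos hrk]
            rw [hgr] at hre
            have heq2 := c2 (r, c) (kk, c) rfl (Nat.lt_succ_of_lt hrk) (Nat.lt_succ_self k) hre
            have hre2 : r = kk := congrArg Prod.fst heq2
            have : (r : ℕ) = k := by rw [hre2]
            omega
          · simp only [if_neg hji, Finset.mem_sdiff, Finset.mem_univ, true_and]
            intro hcon
            obtain ⟨p, hp, hre⟩ := Finset.mem_image.1 hcon
            simp only [Finset.mem_product, Finset.mem_filter, Finset.mem_univ,
              true_and] at hp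
            obtain ⟨⟨hrk, hri⟩, hcc⟩ := hp
            have hgr : g p = f p := by
              rw [← hfψ, hψ]
              simp only [if_pos hrk]
            rw [hgr] at hre
            have heq3 := c3 p (kk, c) (hri.trans hi) hcc (Nat.lt_succ_of_lt hrk)
              (Nat.lt_succ_self k) hre
            have hre3 : p.1 = kk := congrArg Prod.fst heq3
            have : (p.1 : ℕ) = k := by rw [hre3]
            omega
      · intro f1 h1 f2 h2 heq
        simp only [Finset.mem_coe, Finset.mem_filter] at h1 h2
        obtain ⟨h1PB, h1ψ⟩ := h1
        obtain ⟨h2PB, h2ψ⟩ := h2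
        funext p
        obtain ⟨r, c⟩ := p
        rcases lt_trichotomy (r : ℕ) k with hr | hr | hr
        · have e1 : ψ f1 (r, c) = f1 (r, c) := by rw [hψ]; simp [hr]
          have e2 : ψ f2 (r, c) = f2 (r, c) := by rw [hψ]; simp [hr]
          rw [← e1, ← e2, h1ψ, h2ψ]
        · have : r = kk := Fin.ext hr
          rw [this]
          exact congrFun heq c
        · have e1 := (mem_PB.1 h1PB).2.2.2 (r, c) (show k + 1 ≤ (r : ℕ) by omega)
          have e2 := (mem_PB.1 h2PB).2.2.2 (r, c) (show k + 1 ≤ (r : ℕ) by omega)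
          rw [e1, e2]
    -- apply Bregman
    have hbreg := bregman_uniform hN1 (mkn_pos hnpos hk) Ag hAcard
    calc (((PB n (k + 1)).filter (fun f => ψ f = g)).card : ℝ)
        ≤ ((SS (n ^ 2) Ag).card : ℝ) := by exact_mod_cast hinj
      _ ≤ ((mkn n k).factorial : ℝ) ^ (((n ^ 2 : ℕ) : ℝ) / ((mkn n k : ℕ) : ℝ)) := hbreg
      _ = Bk n k := rfl
  calc ((PB n (k + 1)).card : ℝ)
      = ∑ g ∈ PB n k, (((PB n (k + 1)).filter (fun f => ψ f = g)).card : ℝ) := by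
        rw [hcard]
        push_cast
        rfl
    _ ≤ ∑ _g ∈ PB n k, Bk n k := Finset.sum_le_sum hfiber
    _ = ((PB n k).card : ℝ) * Bk n k := by
        rw [Finset.sum_const, nsmul_eq_mul]

lemma PB_zero_card (n : ℕ) : (PB n 0).card ≤ 1 := by
  apply Finset.card_le_one.2
  intro f1 h1 f2 h2
  funext p
  rw [(mem_PB.1 h1).2.2.2 p (Nat.zero_le _), (mem_PB.1 h2).2.2.2 p (Nat.zero_le _)]

lemma PB_chain (n : ℕ) (hn : 1 ≤ n) : ∀ k, k ≤ n ^ 2 →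
    ((PB n k).card : ℝ) ≤ ∏ t ∈ Finset.range k, Bk n t := by
  intro k
  induction k with
  | zero =>
    intro _
    simp only [Finset.range_zero, Finset.prod_empty]
    exact_mod_cast PB_zero_card n
  | succ k ih =>
    intro hk1
    calc ((PB n (k + 1)).card : ℝ) ≤ ((PB n k).card : ℝ) * Bk n k :=
        PB_step n hn (by omega)
      _ ≤ (∏ t ∈ Finset.range k, Bk n t) * Bk n k :=
        mul_le_mul_of_nonneg_right (ih (by omega)) (Bk_nonneg n k)
      _ = ∏ t ∈ Finset.range (k + 1), Bk n t := (Finset.prod_range_succ _ _).symm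

lemma key_lt {n : ℕ} (i j : ℕ) (hi : i < n) (hj : j < n) : i * n + j < n ^ 2 := by
  calc i * n + j < i * n + n := by omega
    _ = (i + 1) * n := by ring
    _ ≤ n * n := Nat.mul_le_mul_right n (by omega)
    _ = n ^ 2 := (sq n).symm

lemma key_div {n : ℕ} (hn : 0 < n) (i j : ℕ) (hj : j < n) : (i * n + j) / n = i := by
  rw [add_comm, Nat.add_mul_div_right _ _ hn, Nat.div_eq_of_lt hj, zero_add]

lemma key_mod {n : ℕ} (i j : ℕ) (hj : j < n) : (i * n + j) % n = j := by
  rw [add_comm, Nat.add_mul_mod_self_right, Nat.mod_eq_of_lt hj]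

lemma prod_Bk (n : ℕ) (hn : 1 ≤ n) :
    ∏ t ∈ Finset.range (n ^ 2), Bk n t =
      ∏ i ∈ Finset.range n,
        (∏ j ∈ Finset.range (i + 1),
          ((n ^ 2 - i * n - j).factorial : ℝ) ^
            ((n ^ 2 : ℝ) / ((n : ℝ) ^ 2 - i * n - j))) *
        (∏ j ∈ Finset.Ico (i + 1) n,
          ((n ^ 2 - j * n).factorial : ℝ) ^
            ((n ^ 2 : ℝ) / ((n : ℝ) ^ 2 - j * n))) := by
  classical
  have hnpos : 0 < n := hn
  -- reindex over pairs
  have step1 : ∏ t ∈ Finset.range (n ^ 2), Bk n t =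
      ∏ p ∈ Finset.range n ×ˢ Finset.range n, Bk n (p.1 * n + p.2) := by
    symm
    apply Finset.prod_nbij' (fun p => p.1 * n + p.2) (fun t => (t / n, t % n))
    · intro p hp
      simp only [Finset.mem_product, Finset.mem_range] at hp
      exact Finset.mem_range.2 (key_lt p.1 p.2 hp.1 hp.2)
    · intro t ht
      have ht' := Finset.mem_range.1 ht
      simp only [Finset.mem_product, Finset.mem_range]
      constructor
      · rw [Nat.div_lt_iff_lt_mul hnpos]
        calc t < n ^ 2 := ht'
          _ = n * n := sq n
      · exact Nat.mod_lt _ hnpos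
    · intro p hp
      simp only [Finset.mem_product, Finset.mem_range] at hp
      ext
      · exact key_div hnpos p.1 p.2 hp.2
      · exact key_mod p.1 p.2 hp.2
    · intro t _
      simp only
      rw [mul_comm]
      exact Nat.div_add_mod t n
    · intro p _; rfl
  rw [step1, Finset.prod_product]
  apply Finset.prod_congr rfl
  intro i hi
  have hin : i < n := Finset.mem_range.1 hi
  -- split the inner product
  have hsplit : ∏ j ∈ Finset.range n, Bk n (i * n + j) =
      (∏ j ∈ Finset.Ico 0 (i + 1), Bk n (i * n + j)) *
      (∏ j ∈ Finset.Ico (i + 1) n, Bk n (i * n + j)) := by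
    rw [Finset.prod_Ico_consecutive _ (Nat.zero_le _) (by omega)]
    rw [Finset.range_eq_Ico]
  rw [hsplit]
  congr 1
  · rw [← Finset.range_eq_Ico]
    apply Finset.prod_congr rfl
    intro j hj
    have hji : j ≤ i := by
      have := Finset.mem_range.1 hj
      omega
    have hjn : j < n := by omega
    have hm : mkn n (i * n + j) = n ^ 2 - i * n - j := by
      unfold mkn
      rw [key_mod i j hjn, key_div hnpos i j hjn, if_pos hji, Nat.sub_sub]
    rw [Bk, hm]
    congr 1
    have hle : i * n + j ≤ n ^ 2 := le_of_lt (key_lt i j hin hjn)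
    have h2 : i * n ≤ n ^ 2 := by omega
    have h1 : j ≤ n ^ 2 - i * n := by omega
    rw [Nat.cast_sub h1, Nat.cast_sub h2]
    push_cast
    ring
  · apply Finset.prod_congr rfl
    intro j hj
    obtain ⟨hji, hjn⟩ := Finset.mem_Ico.1 hj
    have hm : mkn n (i * n + j) = n ^ 2 - j * n := by
      unfold mkn
      rw [key_mod i j hjn, key_div hnpos i j hjn, if_neg (by omega)]
    rw [Bk, hm]
    congr 1
    have h2 : j * n ≤ n ^ 2 := by
      calc j * n ≤ n * n := Nat.mul_le_mul_right n (le_of_lt hjn)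
        _ = n ^ 2 := (sq n).symm
    rw [Nat.cast_sub h2]
    push_cast
    ring

end SudokuAux

open Finset

/-- An `n × n` Sudoku solution: a function on the `n² × n²` grid injective on each
row, each column, and each of the `n²` blocks of size `n × n`. -/
def IsSudoku (n : ℕ) (f : Fin (n ^ 2) × Fin (n ^ 2) → Fin (n ^ 2)) : Prop :=
  (∀ p q : Fin (n ^ 2) × Fin (n ^ 2), p.1 = q.1 → f p = f q → p = q) ∧
  (∀ p q : Fin (n ^ 2) × Fin (n ^ 2), p.2 = q.2 → f p = f q → p = q) ∧
  (∀ p q : Fin (n ^ 2) × Fin (n ^ 2), (p.1 : ℕ) / n = (q.1 : ℕ) / n →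
    (p.2 : ℕ) / n = (q.2 : ℕ) / n → f p = f q → p = q)

/-- Herzberg's upper bound: the number of solutions `S(n)` to an `n × n` Sudoku
satisfies `S(n) ≤ ∏_{i=1}^n (∏_{j=1}^i μ(i,j)) (∏_{j=i+1}^n ν(j))`.
Here the indices `i, j` are shifted down by one relative to the informal statement. -/
theorem sudoku_card_le (n : ℕ) (hn : 1 ≤ n) :
    (Nat.card {f : Fin (n ^ 2) × Fin (n ^ 2) → Fin (n ^ 2) // IsSudoku n f} : ℝ) ≤
      ∏ i ∈ range n,
        (∏ j ∈ range (i + 1),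
          ((n ^ 2 - i * n - j).factorial : ℝ) ^
            ((n ^ 2 : ℝ) / ((n : ℝ) ^ 2 - i * n - j))) *
        (∏ j ∈ Ico (i + 1) n,
          ((n ^ 2 - j * n).factorial : ℝ) ^
            ((n ^ 2 : ℝ) / ((n : ℝ) ^ 2 - j * n))) := by
  classical
  have h0 : (Nat.card {f : Fin (n ^ 2) × Fin (n ^ 2) → Fin (n ^ 2) // IsSudoku n f}) =
      ((Finset.univ : Finset (Fin (n ^ 2) × Fin (n ^ 2) → Fin (n ^ 2))).filter
        (fun f => IsSudoku n f)).card := by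
    rw [Nat.card_eq_fintype_card, Fintype.card_subtype]
  have hsub : ((Finset.univ : Finset (Fin (n ^ 2) × Fin (n ^ 2) → Fin (n ^ 2))).filter
      (fun f => IsSudoku n f)) ⊆ SudokuAux.PB n (n ^ 2) := by
    intro f hf
    obtain ⟨s1, s2, s3⟩ := (Finset.mem_filter.1 hf).2
    apply SudokuAux.mem_PB.2
    refine ⟨fun p q h1 _ h2 => s1 p q h1 h2, fun p q h1 _ _ h2 => s2 p q h1 h2,
      fun p q h1 h2 _ _ h3 => s3 p q h1 h2 h3, fun p hp => ?_⟩
    exact absurd p.1.isLt (by omega)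
  rw [h0, ← SudokuAux.prod_Bk n hn]
  calc ((((Finset.univ : Finset (Fin (n ^ 2) × Fin (n ^ 2) → Fin (n ^ 2))).filter
        (fun f => IsSudoku n f)).card : ℕ) : ℝ)
      ≤ ((SudokuAux.PB n (n ^ 2)).card : ℝ) := by
        exact_mod_cast Finset.card_le_card hsub
    _ ≤ ∏ t ∈ Finset.range (n ^ 2), SudokuAux.Bk n t := SudokuAux.PB_chain n hn _ le_rfl
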